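/- Under the hypotheses of the previous statement, the matrix M also satisfies the lower bound ‖UUᵀ M VVᵀ‖_F ≥ (1 − 2 max{‖UUᵀ − U*U*ᵀ‖, ‖VVᵀ − V*V*ᵀ‖}) ‖M‖_F. In particular, if the max of the two subspace distances is at most 0.05, then ‖Uᵀ M V‖_F ≥ 0.9 ‖M‖_F. -/

import Mathlib

open Matrix Finset

/-- Euclidean norm of a vector. -/
noncomputable def enorm {ι : Type*} [Fintype ι] (x : ι → ℝ) : ℝ :=
  Real.sqrt (∑ i, x i ^ 2)

/-- Frobenius norm of a matrix. -/
noncomputable def frob {ι κ : Type*} [Fintype ι] [Fintype κ] (A : Matrix ι κ ℝ) : ℝ :=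
  Real.sqrt (∑ i, ∑ j, A i j ^ 2)

/-- Matrix inner product ⟨A,B⟩ = Tr(AᵀB). -/
noncomputable def minner {ι κ : Type*} [Fintype ι] [Fintype κ] (A B : Matrix ι κ ℝ) : ℝ :=
  ∑ i, ∑ j, A i j * B i j

/-- The k-th largest singular value, via the Courant–Fischer max-min characterization. -/
noncomputable def sval {ι κ : Type*} [Fintype ι] [Fintype κ] (A : Matrix ι κ ℝ) (k : ℕ) : ℝ :=
  sSup {t : ℝ | ∃ V : Submodule ℝ (κ → ℝ), Module.finrank ℝ V = k ∧
    ∀ x ∈ V, t * _root_.enorm x ≤ _root_.enorm (A.mulVec x)}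

/-- Spectral (operator) norm = largest singular value. -/
noncomputable def spec {ι κ : Type*} [Fintype ι] [Fintype κ] (A : Matrix ι κ ℝ) : ℝ :=
  sval A 1

section aux
variable {ι κ μ : Type*} [Fintype ι] [Fintype κ] [Fintype μ]

lemma enorm_nonneg' (x : ι → ℝ) : 0 ≤ _root_.enorm x := Real.sqrt_nonneg _

lemma enorm_sq (x : ι → ℝ) : _root_.enorm x ^ 2 = ∑ i, x i ^ 2 :=
  Real.sq_sqrt (Finset.sum_nonneg fun i _ => sq_nonneg _)

lemma enorm_zero' : _root_.enorm (0 : ι → ℝ) = 0 := by simp [_root_.enorm]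

lemma enorm_smul' (c : ℝ) (x : ι → ℝ) : _root_.enorm (c • x) = |c| * _root_.enorm x := by
  simp only [_root_.enorm, Pi.smul_apply, smul_eq_mul, mul_pow, ← Finset.mul_sum]
  rw [Real.sqrt_mul (sq_nonneg c), Real.sqrt_sq_eq_abs]

lemma enorm_neg' (x : ι → ℝ) : _root_.enorm (-x) = _root_.enorm x := by
  simp [_root_.enorm]

lemma enorm_pos_aux (x : ι → ℝ) (hx : x ≠ 0) : 0 < _root_.enorm x := by
  rw [_root_.enorm, Real.sqrt_pos]
  obtain ⟨i, hi⟩ := Function.ne_iff.mp hx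
  exact Finset.sum_pos' (fun j _ => sq_nonneg _) ⟨i, Finset.mem_univ i, pow_pos (abs_pos.mpr hi) 2 |>.trans_le (by rw [← abs_pow, abs_of_nonneg (sq_nonneg _)])⟩

lemma dot_le_enorm (x y : ι → ℝ) : ∑ i, x i * y i ≤ _root_.enorm x * _root_.enorm y := by
  have h := Finset.sum_mul_sq_le_sq_mul_sq Finset.univ x y
  calc ∑ i, x i * y i ≤ |∑ i, x i * y i| := le_abs_self _
    _ = Real.sqrt ((∑ i, x i * y i)^2) := (Real.sqrt_sq_eq_abs _).symm
    _ ≤ Real.sqrt ((∑ i, x i ^2) * (∑ i, y i ^2)) := Real.sqrt_le_sqrt h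
    _ = _root_.enorm x * _root_.enorm y := by
        rw [_root_.enorm, _root_.enorm, ← Real.sqrt_mul (Finset.sum_nonneg fun i _ => sq_nonneg _)]

lemma enorm_add_le_aux (x y : ι → ℝ) : _root_.enorm (x + y) ≤ _root_.enorm x + _root_.enorm y := by
  have h1 : _root_.enorm (x+y) ^ 2 ≤ (_root_.enorm x + _root_.enorm y)^2 := by
    rw [enorm_sq]
    have : ∀ i, (x+y) i ^2 = x i ^2 + 2*(x i * y i) + y i ^2 := fun i => by
      simp [Pi.add_apply]; ring
    simp only [this, Finset.sum_add_distrib, ← Finset.mul_sum]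
    have := dot_le_enorm x y
    have hx := enorm_sq x; have hy := enorm_sq y
    nlinarith
  have := enorm_nonneg' (x+y)
  nlinarith [enorm_nonneg' x, enorm_nonneg' y]

lemma enorm_mulVec_le_frob (A : Matrix ι κ ℝ) (x : κ → ℝ) :
    _root_.enorm (A.mulVec x) ≤ frob A * _root_.enorm x := by
  have key : ∑ i, (A.mulVec x) i ^2 ≤ (∑ i, ∑ j, A i j ^2) * (∑ j, x j ^2) := by
    rw [Finset.sum_mul]
    apply Finset.sum_le_sum
    intro i _
    exact Finset.sum_mul_sq_le_sq_mul_sq Finset.univ (A i) x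
  calc _root_.enorm (A.mulVec x) = Real.sqrt (∑ i, (A.mulVec x) i ^2) := rfl
    _ ≤ Real.sqrt ((∑ i, ∑ j, A i j ^2) * (∑ j, x j ^2)) := Real.sqrt_le_sqrt key
    _ = frob A * _root_.enorm x := by
        rw [frob, _root_.enorm, ← Real.sqrt_mul]
        exact Finset.sum_nonneg fun i _ => Finset.sum_nonneg fun j _ => sq_nonneg _

lemma mem_spec_le (A : Matrix ι κ ℝ) {c t : ℝ}
    (hc : ∀ x, _root_.enorm (A.mulVec x) ≤ c * _root_.enorm x)
    (ht : t ∈ {t : ℝ | ∃ V : Submodule ℝ (κ → ℝ), Module.finrank ℝ V = 1 ∧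
      ∀ x ∈ V, t * _root_.enorm x ≤ _root_.enorm (A.mulVec x)}) : t ≤ c := by
  obtain ⟨W, hW1, hW2⟩ := ht
  have hbot : W ≠ ⊥ := by
    intro h; rw [h] at hW1; simp at hW1
  obtain ⟨x, hxW, hx0⟩ := Submodule.exists_mem_ne_zero_of_ne_bot hbot
  have h1 := hW2 x hxW
  have h2 := hc x
  have := enorm_pos_aux x hx0
  nlinarith

lemma spec_bddAbove (A : Matrix ι κ ℝ) :
    BddAbove {t : ℝ | ∃ V : Submodule ℝ (κ → ℝ), Module.finrank ℝ V = 1 ∧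
      ∀ x ∈ V, t * _root_.enorm x ≤ _root_.enorm (A.mulVec x)} :=
  ⟨frob A, fun t ht => mem_spec_le A (enorm_mulVec_le_frob A) ht⟩

lemma spec_le (A : Matrix ι κ ℝ) {c : ℝ} (hc0 : 0 ≤ c)
    (hc : ∀ x, _root_.enorm (A.mulVec x) ≤ c * _root_.enorm x) : spec A ≤ c :=
  Real.sSup_le (fun t ht => mem_spec_le A hc ht) hc0

lemma enorm_mulVec_le_spec (A : Matrix ι κ ℝ) (x : κ → ℝ) :
    _root_.enorm (A.mulVec x) ≤ spec A * _root_.enorm x := by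
  rcases eq_or_ne x 0 with rfl | hx
  · simp [Matrix.mulVec_zero, enorm_zero']
  · have hxpos := enorm_pos_aux x hx
    have hmem : _root_.enorm (A.mulVec x) / _root_.enorm x ∈ {t : ℝ | ∃ V : Submodule ℝ (κ → ℝ),
        Module.finrank ℝ V = 1 ∧ ∀ y ∈ V, t * _root_.enorm y ≤ _root_.enorm (A.mulVec y)} := by
      refine ⟨Submodule.span ℝ {x}, finrank_span_singleton hx, ?_⟩
      intro y hy
      obtain ⟨c, rfl⟩ := Submodule.mem_span_singleton.mp hy
      rw [Matrix.mulVec_smul, enorm_smul', enorm_smul']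
      apply le_of_eq
      field_simp
    have hle : _root_.enorm (A.mulVec x) / _root_.enorm x ≤ spec A := le_csSup (spec_bddAbove A) hmem
    rw [div_le_iff₀ hxpos] at hle
    exact hle

lemma spec_nonneg (A : Matrix ι κ ℝ) : 0 ≤ spec A := by
  cases isEmpty_or_nonempty κ with
  | inl h =>
    have : {t : ℝ | ∃ V : Submodule ℝ (κ → ℝ), Module.finrank ℝ V = 1 ∧
        ∀ x ∈ V, t * _root_.enorm x ≤ _root_.enorm (A.mulVec x)} = ∅ := by
      ext t; simp only [Set.mem_setOf_eq, Set.mem_empty_iff_false, iff_false, not_exists]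
      intro W ⟨hW1, _⟩
      haveI : Subsingleton (κ → ℝ) := ⟨fun a b => funext fun i => (h.elim i)⟩
      have h0 : Module.finrank ℝ W = 0 := Module.finrank_zero_of_subsingleton
      omega
    simp [spec, sval, this, Real.sSup_empty]
  | inr h =>
    obtain ⟨j⟩ := h
    set e : κ → ℝ := fun _ => 1 with he
    have he0 : e ≠ 0 := by
      intro h0
      have := congrFun h0 j
      simp [he] at this
    have h1 := enorm_mulVec_le_spec A e
    have h2 := enorm_nonneg' (A.mulVec e)
    have h3 := enorm_pos_aux e he0
    nlinarith

lemma spec_neg (A : Matrix ι κ ℝ) : spec (-A) = spec A := by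
  unfold spec sval
  congr 1
  ext t
  simp only [Set.mem_setOf_eq]
  constructor
  · rintro ⟨W, hW1, hW2⟩
    exact ⟨W, hW1, fun x hx => by
      rw [← enorm_neg' (A.mulVec x), ← Matrix.neg_mulVec]; exact hW2 x hx⟩
  · rintro ⟨W, hW1, hW2⟩
    exact ⟨W, hW1, fun x hx => by
      rw [Matrix.neg_mulVec, enorm_neg']; exact hW2 x hx⟩

lemma frob_nonneg (A : Matrix ι κ ℝ) : 0 ≤ frob A := Real.sqrt_nonneg _

lemma frob_sq (A : Matrix ι κ ℝ) : frob A ^ 2 = ∑ i, ∑ j, A i j ^2 :=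
  Real.sq_sqrt (Finset.sum_nonneg fun i _ => Finset.sum_nonneg fun j _ => sq_nonneg _)

lemma frob_transpose (A : Matrix ι κ ℝ) : frob Aᵀ = frob A := by
  rw [frob, frob, Finset.sum_comm]
  simp [Matrix.transpose_apply]

lemma frob_eq_enorm (A : Matrix ι κ ℝ) : frob A = _root_.enorm (fun p : ι × κ => A p.1 p.2) := by
  rw [frob, _root_.enorm, Fintype.sum_prod_type]

lemma frob_add_le (A B : Matrix ι κ ℝ) : frob (A + B) ≤ frob A + frob B := by
  rw [frob_eq_enorm, frob_eq_enorm, frob_eq_enorm]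
  have : (fun p : ι × κ => (A + B) p.1 p.2) =
      (fun p : ι × κ => A p.1 p.2) + (fun p : ι × κ => B p.1 p.2) := by
    ext p; simp [Matrix.add_apply]
  rw [this]
  exact enorm_add_le_aux _ _

lemma frob_mul_le (A : Matrix ι κ ℝ) (B : Matrix κ μ ℝ) :
    frob (A * B) ≤ spec A * frob B := by
  have key : ∑ i, ∑ j, (A * B) i j ^2 ≤ spec A ^2 * ∑ j, ∑ k, B k j ^2 := by
    rw [Finset.sum_comm, Finset.mul_sum]
    apply Finset.sum_le_sum
    intro j _
    have h1 : ∑ i, (A * B) i j ^2 = _root_.enorm (A.mulVec (fun k => B k j)) ^2 := by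
      rw [enorm_sq]
      apply Finset.sum_congr rfl
      intro i _
      simp [Matrix.mul_apply, Matrix.mulVec, dotProduct]
    have h2 := enorm_mulVec_le_spec A (fun k => B k j)
    have h3 := enorm_nonneg' (A.mulVec (fun k => B k j))
    have h4 : _root_.enorm (fun k => B k j) ^2 = ∑ k, B k j ^2 := enorm_sq _
    nlinarith
  have h5 : frob (A*B) ^2 ≤ (spec A * frob B)^2 := by
    have hB : (∑ k, ∑ j, B k j ^2) = ∑ j, ∑ k, B k j ^2 := Finset.sum_comm
    rw [frob_sq, mul_pow, frob_sq, hB]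
    exact key
  nlinarith [frob_nonneg (A*B), spec_nonneg A, frob_nonneg B,
    mul_nonneg (spec_nonneg A) (frob_nonneg B),
    sq_nonneg (frob (A*B) + spec A * frob B)]

lemma proj_contract (P : Matrix ι ι ℝ) (hsymm : Pᵀ = P) (hidem : P * P = P)
    (x : ι → ℝ) : _root_.enorm (P.mulVec x) ≤ _root_.enorm x := by
  set y := P.mulVec x with hy
  have key : ∑ i, y i ^2 = ∑ i, y i * x i := by
    have h1 : ∑ i, y i ^2 = y ⬝ᵥ y := by simp [dotProduct, sq]
    have h2 : y ⬝ᵥ y = y ⬝ᵥ (P.mulVec x) := rfl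
    rw [h1, h2, Matrix.dotProduct_mulVec, ← Matrix.mulVec_transpose, hsymm, hy,
      Matrix.mulVec_mulVec, hidem]
    simp [dotProduct]
  have h3 : _root_.enorm y ^2 ≤ _root_.enorm y * _root_.enorm x := by
    rw [enorm_sq, key]; exact dot_le_enorm y x
  rcases eq_or_lt_of_le (enorm_nonneg' y) with h | h
  · rw [← h]; exact enorm_nonneg' x
  · nlinarith

lemma spec_proj_le_one (P : Matrix ι ι ℝ) (hsymm : Pᵀ = P) (hidem : P * P = P) :
    spec P ≤ 1 :=
  spec_le P zero_le_one fun x => by simpa using proj_contract P hsymm hidem x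

lemma frob_sum_eq_trace (B : Matrix ι κ ℝ) : ∑ i, ∑ j, B i j ^2 = (Bᵀ * B).trace := by
  rw [Matrix.trace, Finset.sum_comm]
  apply Finset.sum_congr rfl
  intro i _
  simp [Matrix.diag, Matrix.mul_apply, Matrix.transpose_apply, sq, Finset.sum_comm]

lemma frob_unitary_left {R : Type*} [Fintype R] [DecidableEq R] (U : Matrix ι R ℝ)
    (hU : Uᵀ * U = 1) (A : Matrix R κ ℝ) : frob (U * A) = frob A := by
  rw [frob, frob]
  congr 1
  rw [frob_sum_eq_trace, frob_sum_eq_trace, Matrix.transpose_mul,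
    Matrix.mul_assoc, ← Matrix.mul_assoc Uᵀ U A, hU, Matrix.one_mul]

end aux

/-- Stmt 10: under the hypotheses of Stmt 9, the lower bound
‖UUᵀMVVᵀ‖_F ≥ (1 − 2·maxdist)‖M‖_F holds; in particular if maxdist ≤ 0.05 then
‖UᵀMV‖_F ≥ 0.9‖M‖_F. -/
theorem stmt10 (n₁ n₂ R : ℕ)
    (U Ustar : Matrix (Fin n₁) (Fin R) ℝ) (V Vstar : Matrix (Fin n₂) (Fin R) ℝ)
    (hU : Uᵀ * U = 1) (hUs : Ustarᵀ * Ustar = 1)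
    (hV : Vᵀ * V = 1) (hVs : Vstarᵀ * Vstar = 1)
    (M : Matrix (Fin n₁) (Fin n₂) ℝ)
    (hM : M = Ustar * Ustarᵀ * M * Vstar * Vstarᵀ) :
    frob (U * Uᵀ * M * V * Vᵀ) ≥
      (1 - 2 * max (spec (U * Uᵀ - Ustar * Ustarᵀ)) (spec (V * Vᵀ - Vstar * Vstarᵀ))) * frob M ∧
    (max (spec (U * Uᵀ - Ustar * Ustarᵀ)) (spec (V * Vᵀ - Vstar * Vstarᵀ)) ≤ 0.05 →
      frob (Uᵀ * M * V) ≥ 0.9 * frob M) := by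
  set P := U * Uᵀ with hP
  set Ps := Ustar * Ustarᵀ with hPs
  set Q := V * Vᵀ with hQ
  set Qs := Vstar * Vstarᵀ with hQs
  clear_value P Ps Q Qs
  have hPP : P * P = P := by
    rw [hP, Matrix.mul_assoc, ← Matrix.mul_assoc Uᵀ U Uᵀ, hU, Matrix.one_mul]
  have hQQ : Q * Q = Q := by
    rw [hQ, Matrix.mul_assoc, ← Matrix.mul_assoc Vᵀ V Vᵀ, hV, Matrix.one_mul]
  have hPsPs : Ps * Ps = Ps := by
    rw [hPs, Matrix.mul_assoc, ← Matrix.mul_assoc Ustarᵀ Ustar Ustarᵀ, hUs, Matrix.one_mul]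
  have hQsQs : Qs * Qs = Qs := by
    rw [hQs, Matrix.mul_assoc, ← Matrix.mul_assoc Vstarᵀ Vstar Vstarᵀ, hVs, Matrix.one_mul]
  have hPt : Pᵀ = P := by rw [hP, Matrix.transpose_mul, Matrix.transpose_transpose]
  have hQt : Qᵀ = Q := by rw [hQ, Matrix.transpose_mul, Matrix.transpose_transpose]
  have hQst : Qsᵀ = Qs := by rw [hQs, Matrix.transpose_mul, Matrix.transpose_transpose]
  have hM' : M = Ps * M * Qs := by
    conv_lhs => rw [hM]
    rw [Matrix.mul_assoc (Ps * M), ← hQs]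
  have hMQs : M * Qs = M := by
    conv_lhs => rw [hM']
    rw [Matrix.mul_assoc (Ps * M), hQsQs, ← hM']
  have hPsM : Ps * M = M := by
    conv_lhs => rw [hM']
    rw [← Matrix.mul_assoc, ← Matrix.mul_assoc, hPsPs, ← hM']
  -- key algebraic identity
  have e1 : (Ps - P) * M = M - P * M := by rw [Matrix.sub_mul, hPsM]
  have h1 : (1 - P) * ((Ps - P) * M) = M - P * M := by
    rw [e1, Matrix.sub_mul, Matrix.one_mul, Matrix.mul_sub, ← Matrix.mul_assoc, hPP,
      sub_self, sub_zero]
  have e2 : (Qs - Q) * (1 - Q) = Qs - Qs * Q := by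
    rw [Matrix.sub_mul, Matrix.mul_sub, Matrix.mul_sub, Matrix.mul_one, Matrix.mul_one,
      hQQ, sub_self, sub_zero]
  have h2 : M * ((Qs - Q) * (1 - Q)) = M - M * Q := by
    rw [e2, Matrix.mul_sub, ← Matrix.mul_assoc, hMQs]
  have key : M - P * M * Q = (1 - P) * ((Ps - P) * M) + P * (M * ((Qs - Q) * (1 - Q))) := by
    rw [h1, h2, Matrix.mul_sub, ← Matrix.mul_assoc]
    abel
  -- spectral norm bounds for projections
  have hspecP : spec P ≤ 1 := spec_proj_le_one P hPt hPP
  have hspec1P : spec (1 - P) ≤ 1 := by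
    apply spec_proj_le_one
    · rw [Matrix.transpose_sub, Matrix.transpose_one, hPt]
    · have h : (1 - P) * (1 - P) = 1 - P - P + P * P := by noncomm_ring
      rw [h, hPP]; abel
  have hspec1Q : spec (1 - Q) ≤ 1 := by
    apply spec_proj_le_one
    · rw [Matrix.transpose_sub, Matrix.transpose_one, hQt]
    · have h : (1 - Q) * (1 - Q) = 1 - Q - Q + Q * Q := by noncomm_ring
      rw [h, hQQ]; abel
  -- bounds on the two terms
  have b1 : frob ((1 - P) * ((Ps - P) * M)) ≤ spec (P - Ps) * frob M := by
    calc frob ((1 - P) * ((Ps - P) * M)) ≤ spec (1 - P) * frob ((Ps - P) * M) :=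
          frob_mul_le _ _
      _ ≤ 1 * frob ((Ps - P) * M) := mul_le_mul_of_nonneg_right hspec1P (frob_nonneg _)
      _ = frob ((Ps - P) * M) := one_mul _
      _ ≤ spec (Ps - P) * frob M := frob_mul_le _ _
      _ = spec (P - Ps) * frob M := by rw [← spec_neg (P - Ps), neg_sub]
  have b2 : frob (P * (M * ((Qs - Q) * (1 - Q)))) ≤ spec (Q - Qs) * frob M := by
    have e1 : frob (M * ((Qs - Q) * (1 - Q))) = frob ((1 - Q) * ((Qs - Q) * Mᵀ)) := by
      rw [← frob_transpose (M * ((Qs - Q) * (1 - Q)))]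
      congr 1
      rw [Matrix.transpose_mul, Matrix.transpose_mul, Matrix.transpose_sub,
        Matrix.transpose_sub, Matrix.transpose_one, hQt, hQst, Matrix.mul_assoc]
    calc frob (P * (M * ((Qs - Q) * (1 - Q))))
        ≤ spec P * frob (M * ((Qs - Q) * (1 - Q))) := frob_mul_le _ _
      _ ≤ 1 * frob (M * ((Qs - Q) * (1 - Q))) := mul_le_mul_of_nonneg_right hspecP (frob_nonneg _)
      _ = frob ((1 - Q) * ((Qs - Q) * Mᵀ)) := by rw [one_mul, e1]
      _ ≤ spec (1 - Q) * frob ((Qs - Q) * Mᵀ) := frob_mul_le _ _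
      _ ≤ 1 * frob ((Qs - Q) * Mᵀ) := mul_le_mul_of_nonneg_right hspec1Q (frob_nonneg _)
      _ = frob ((Qs - Q) * Mᵀ) := one_mul _
      _ ≤ spec (Qs - Q) * frob Mᵀ := frob_mul_le _ _
      _ = spec (Q - Qs) * frob M := by rw [← spec_neg (Q - Qs), neg_sub, frob_transpose]
  have hdiff : frob (M - P * M * Q) ≤ (spec (P - Ps) + spec (Q - Qs)) * frob M := by
    rw [key, add_mul]
    exact le_trans (frob_add_le _ _) (add_le_add b1 b2)
  have htri : frob M ≤ frob (M - P * M * Q) + frob (P * M * Q) := by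
    have h := frob_add_le (M - P * M * Q) (P * M * Q)
    rwa [sub_add_cancel] at h
  set d := max (spec (P - Ps)) (spec (Q - Qs)) with hd
  clear_value d
  have hdd : (spec (P - Ps) + spec (Q - Qs)) * frob M ≤ 2 * d * frob M := by
    apply mul_le_mul_of_nonneg_right _ (frob_nonneg M)
    have := le_max_left (spec (P - Ps)) (spec (Q - Qs))
    have := le_max_right (spec (P - Ps)) (spec (Q - Qs))
    rw [hd]; linarith
  have main1 : frob (P * M * Q) ≥ (1 - 2 * d) * frob M := by nlinarith [frob_nonneg M]
  have hgoal1 : P * M * V * Vᵀ = P * M * Q := by rw [hQ, Matrix.mul_assoc (P * M)]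
  constructor
  · rw [hgoal1]; exact main1
  · intro hm
    have hfrobeq : frob (P * M * Q) = frob (Uᵀ * M * V) := by
      have hA : P * M * Q = U * ((Uᵀ * M * V) * Vᵀ) := by
        rw [hP, hQ]; simp only [Matrix.mul_assoc]
      calc frob (P * M * Q) = frob (U * ((Uᵀ * M * V) * Vᵀ)) := by rw [hA]
        _ = frob ((Uᵀ * M * V) * Vᵀ) := frob_unitary_left U hU _
        _ = frob (((Uᵀ * M * V) * Vᵀ)ᵀ) := (frob_transpose _).symm
        _ = frob (V * (Uᵀ * M * V)ᵀ) := by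
            rw [Matrix.transpose_mul, Matrix.transpose_transpose]
        _ = frob ((Uᵀ * M * V)ᵀ) := frob_unitary_left V hV _
        _ = frob (Uᵀ * M * V) := frob_transpose _
    rw [← hfrobeq]
    have h09 : (0.9 : ℝ) ≤ 1 - 2 * d := by norm_num at hm ⊢; linarith
    calc (0.9 : ℝ) * frob M ≤ (1 - 2 * d) * frob M :=
          mul_le_mul_of_nonneg_right h09 (frob_nonneg M)
      _ ≤ frob (P * M * Q) := main1
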